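/- Let N be an odd positive integer and c = (c₁,c₂,c₃) ∈ ℝ³. The matrix ϖ(c) is positive semidefinite if and only if c₁² + c₂² + c₃² ≤ 1, i.e. if and only if (c₁,c₂,c₃) lies in the closed Euclidean unit ball of ℝ³. -/

import Mathlib

open Matrix BigOperators Polynomial
open scoped ComplexOrder

/-- The three Pauli matrices. -/
noncomputable def pauli : Fin 3 → Matrix (Fin 2) (Fin 2) ℂ :=
  ![!![0, 1; 1, 0], !![0, -Complex.I; Complex.I, 0], !![1, 0; 0, -1]]

/-- The `N`-fold Kronecker power of a 2×2 matrix, with rows and columns indexed by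
`Fin N → Fin 2` (the `N`-qubit computational basis). -/
noncomputable def kronPow (A : Matrix (Fin 2) (Fin 2) ℂ) (N : ℕ) :
    Matrix (Fin N → Fin 2) (Fin N → Fin 2) ℂ :=
  Matrix.of fun i j => ∏ k, A (i k) (j k)

/-- The `M³_N` state `ϖ(c) = 2^{-N} (I + c₁ σ₁^{⊗N} + c₂ σ₂^{⊗N} + c₃ σ₃^{⊗N})`. -/
noncomputable def Mstate (N : ℕ) (c : Fin 3 → ℝ) :
    Matrix (Fin N → Fin 2) (Fin N → Fin 2) ℂ :=
  ((2 : ℂ) ^ N)⁻¹ • (1 + ∑ j : Fin 3, (c j : ℂ) • kronPow (pauli j) N)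

lemma kronPow_mul (A B : Matrix (Fin 2) (Fin 2) ℂ) (N : ℕ) :
    kronPow A N * kronPow B N = kronPow (A * B) N := by
  ext i j
  simp only [kronPow, Matrix.mul_apply, Matrix.of_apply]
  rw [Finset.prod_univ_sum, Fintype.piFinset_univ]
  congr 1
  ext x
  rw [Finset.prod_mul_distrib]

lemma kronPow_one (N : ℕ) : kronPow 1 N = 1 := by
  ext i j
  simp only [kronPow, Matrix.of_apply, Matrix.one_apply]
  by_cases h : i = j
  · subst h; simp
  · obtain ⟨k, hk⟩ := Function.ne_iff.mp h
    rw [if_neg h]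
    exact Finset.prod_eq_zero (Finset.mem_univ k) (by simp [Matrix.one_apply, hk])

lemma kronPow_conjTranspose (A : Matrix (Fin 2) (Fin 2) ℂ) (N : ℕ) :
    (kronPow A N)ᴴ = kronPow Aᴴ N := by
  ext i j
  simp [kronPow, Matrix.conjTranspose_apply, star_prod]

lemma kronPow_neg (A : Matrix (Fin 2) (Fin 2) ℂ) {N : ℕ} (hN : Odd N) :
    kronPow (-A) N = -kronPow A N := by
  ext i j
  simp only [kronPow, Matrix.of_apply, Matrix.neg_apply]
  calc ∏ k : Fin N, (-A) (i k) (j k) = ∏ k : Fin N, (-1) * A (i k) (j k) := by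
        simp [Matrix.neg_apply]
    _ = (-1)^N * ∏ k : Fin N, A (i k) (j k) := by
        rw [Finset.prod_mul_distrib, Finset.prod_const, Finset.card_univ, Fintype.card_fin]
    _ = -∏ k : Fin N, A (i k) (j k) := by rw [hN.neg_one_pow]; ring

lemma pauli_mul_self (j : Fin 3) : pauli j * pauli j = 1 := by
  fin_cases j <;>
  · ext i k
    fin_cases i <;> fin_cases k <;>
      simp [pauli, Matrix.mul_apply, Fin.sum_univ_two, Matrix.one_apply, Complex.I_mul_I]

lemma pauli_conjTranspose (j : Fin 3) : (pauli j)ᴴ = pauli j := by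
  fin_cases j <;>
  · ext i k
    fin_cases i <;> fin_cases k <;> simp [pauli, Matrix.conjTranspose_apply]

lemma pauli_anticomm (i j : Fin 3) (h : i ≠ j) :
    pauli i * pauli j = -(pauli j * pauli i) := by
  fin_cases i <;> fin_cases j <;> first
  | exact absurd rfl h
  | · ext a b
      fin_cases a <;> fin_cases b <;>
        simp [pauli, Matrix.mul_apply, Fin.sum_univ_two, Matrix.neg_apply]

lemma P_mul_self (j : Fin 3) (N : ℕ) :
    kronPow (pauli j) N * kronPow (pauli j) N = 1 := by
  rw [kronPow_mul, pauli_mul_self, kronPow_one]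

lemma P_anticomm {i j : Fin 3} (h : i ≠ j) {N : ℕ} (hN : Odd N) :
    kronPow (pauli i) N * kronPow (pauli j) N
      = -(kronPow (pauli j) N * kronPow (pauli i) N) := by
  rw [kronPow_mul, kronPow_mul, pauli_anticomm i j h, kronPow_neg _ hN]

lemma A_sq (N : ℕ) (hN : Odd N) (c : Fin 3 → ℝ) :
    (∑ j : Fin 3, (c j : ℂ) • kronPow (pauli j) N) *
      (∑ j : Fin 3, (c j : ℂ) • kronPow (pauli j) N)
    = (((c 0 : ℂ))^2 + (c 1 : ℂ)^2 + (c 2 : ℂ)^2) • 1 := by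
  rw [Fin.sum_univ_three]
  simp only [add_mul, mul_add, smul_mul_assoc, mul_smul_comm, smul_smul,
    P_mul_self, P_anticomm (show (1:Fin 3) ≠ 0 by decide) hN,
    P_anticomm (show (2:Fin 3) ≠ 0 by decide) hN,
    P_anticomm (show (2:Fin 3) ≠ 1 by decide) hN]
  module

lemma posSemidef_real_smul {n : Type*} [Fintype n] {M : Matrix n n ℂ}
    (hM : M.PosSemidef) {t : ℝ} (ht : 0 ≤ t) : ((t : ℂ) • M).PosSemidef := by
  refine Matrix.posSemidef_iff_dotProduct_mulVec.mpr ⟨?_, fun x => ?_⟩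
  · show ((t : ℂ) • M)ᴴ = _
    rw [Matrix.conjTranspose_smul, hM.1]
    congr 1
    exact Complex.conj_ofReal t
  · rw [Matrix.smul_mulVec, dotProduct_smul, smul_eq_mul]
    exact mul_nonneg (Complex.zero_le_real.mpr ht) (hM.dotProduct_mulVec_nonneg x)

theorem stmt3 (N : ℕ) (hN : Odd N) (c : Fin 3 → ℝ) :
    (Mstate N c).PosSemidef ↔ c 0 ^ 2 + c 1 ^ 2 + c 2 ^ 2 ≤ 1 := by
  have hN0 : N ≠ 0 := hN.pos.ne'
  set A := ∑ j : Fin 3, (c j : ℂ) • kronPow (pauli j) N with hAdef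
  set r : ℝ := c 0 ^ 2 + c 1 ^ 2 + c 2 ^ 2 with hrdef
  have hr0 : 0 ≤ r := by rw [hrdef]; positivity
  have hM : Mstate N c = ((2 : ℂ) ^ N)⁻¹ • (1 + A) := rfl
  have hAsq : A * A = (r : ℂ) • 1 := by
    rw [hAdef, A_sq N hN c]
    congr 1
    rw [hrdef]
    push_cast
    ring
  have hAherm : Aᴴ = A := by
    rw [hAdef]
    rw [Matrix.conjTranspose_sum]
    refine Finset.sum_congr rfl fun j _ => ?_
    rw [Matrix.conjTranspose_smul, kronPow_conjTranspose, pauli_conjTranspose]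
    congr 1
    exact Complex.conj_ofReal _
  have hdiag0 : A (fun _ => 0) (fun _ => 0) = (c 2 : ℂ) := by
    rw [hAdef]
    simp only [Matrix.sum_apply, Matrix.smul_apply, smul_eq_mul, Fin.sum_univ_three,
      kronPow, Matrix.of_apply]
    simp [pauli, Finset.prod_const, Finset.card_univ, zero_pow hN0]
  have hdiag1 : A (fun _ => 1) (fun _ => 1) = -(c 2 : ℂ) := by
    rw [hAdef]
    simp only [Matrix.sum_apply, Matrix.smul_apply, smul_eq_mul, Fin.sum_univ_three,
      kronPow, Matrix.of_apply]
    simp [pauli, Finset.prod_const, Finset.card_univ, zero_pow hN0, hN.neg_one_pow]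
  constructor
  · intro h
    by_contra hle
    push_neg at hle
    set s := Real.sqrt r with hs
    have hs1 : 1 < s := by
      rw [hs, show (1:ℝ) = Real.sqrt 1 by simp]
      exact Real.sqrt_lt_sqrt (by norm_num) hle
    have hs2 : s ^ 2 = r := Real.sq_sqrt hr0
    obtain ⟨p, hp⟩ : ∃ p, A p p ≠ (s : ℂ) := by
      by_contra hc
      push_neg at hc
      have h1 := (hc (fun _ => 0)).symm.trans hdiag0
      have h2 := (hc (fun _ => 1)).symm.trans hdiag1
      have e1 : s = c 2 := by exact_mod_cast h1
      have e2 : (s : ℂ) = ((-(c 2) : ℝ) : ℂ) := by push_cast; exact h2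
      have e2' : s = -(c 2) := by exact_mod_cast e2
      linarith
    set w : (Fin N → Fin 2) → ℂ := Pi.single p 1 with hw
    set v := A *ᵥ w - (s : ℂ) • w with hv
    have hvne : v ≠ 0 := by
      intro h0
      apply hp
      have h1 := congrFun h0 p
      simp only [hv, hw, Pi.sub_apply, Matrix.mulVec_single_one, Pi.smul_apply,
        Pi.single_eq_same, smul_eq_mul, mul_one, Pi.zero_apply] at h1
      exact sub_eq_zero.mp h1
    have hsc : (s : ℂ) * (s : ℂ) = (r : ℂ) := by
      rw [← hs2]; push_cast; ring
    have hAv : A *ᵥ v = -((s : ℂ) • v) := by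
      rw [hv, Matrix.mulVec_sub, Matrix.mulVec_smul, Matrix.mulVec_mulVec, hAsq,
        Matrix.smul_mulVec, Matrix.one_mulVec, smul_sub, smul_smul, hsc]
      abel
    have hd : 0 < star v ⬝ᵥ v := Matrix.dotProduct_star_self_pos_iff.mpr hvne
    have hqe : star v ⬝ᵥ (Mstate N c *ᵥ v)
        = ((2 : ℂ) ^ N)⁻¹ * ((1 - (s : ℂ)) * (star v ⬝ᵥ v)) := by
      rw [hM, Matrix.smul_mulVec, Matrix.add_mulVec, Matrix.one_mulVec, hAv,
        dotProduct_smul, dotProduct_add, dotProduct_neg,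
        dotProduct_smul, smul_eq_mul, smul_eq_mul]
      ring
    have hqneg : ((2 : ℂ) ^ N)⁻¹ * ((1 - (s : ℂ)) * (star v ⬝ᵥ v)) < 0 := by
      have ht : (0 : ℂ) < ((2 : ℂ) ^ N)⁻¹ := by
        rw [show ((2 : ℂ) ^ N)⁻¹ = ((((2 : ℝ) ^ N)⁻¹ : ℝ) : ℂ) by push_cast; ring,
          show (0 : ℂ) = ((0 : ℝ) : ℂ) by norm_num]
        exact Complex.real_lt_real.mpr (by positivity)
      have h1s : (1 - (s : ℂ)) < 0 := by
        rw [show (1 - (s : ℂ)) = (((1 - s : ℝ)) : ℂ) by push_cast; ring,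
          show (0 : ℂ) = ((0 : ℝ) : ℂ) by norm_num]
        exact Complex.real_lt_real.mpr (by linarith)
      exact mul_neg_of_pos_of_neg ht (mul_neg_of_neg_of_pos h1s hd)
    have := h.dotProduct_mulVec_nonneg v
    rw [hqe] at this
    exact absurd this hqneg.not_ge
  · intro hle
    have hu0 : (0:ℝ) ≤ 1 - r := by linarith
    set u := Real.sqrt (1 - r) with hu
    have hu2 : u ^ 2 = 1 - r := Real.sq_sqrt hu0
    have hune : 0 ≤ u := Real.sqrt_nonneg _
    set a := Real.sqrt ((1 + u) / 2) with ha
    have ha2 : a ^ 2 = (1 + u) / 2 := Real.sq_sqrt (by linarith)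
    have ha0 : 0 < a := by
      rw [ha]; exact Real.sqrt_pos.mpr (by linarith)
    set b := 1 / (2 * a) with hb
    have e2r : a * b + b * a = 1 := by rw [hb]; field_simp; ring
    have e1r : a * a + (b * b) * r = 1 := by
      rw [hb]; field_simp; nlinarith [ha2, hu2]
    have e1 : (a : ℂ) * (a : ℂ) + ((b : ℂ) * (b : ℂ)) * (r : ℂ) = 1 := by
      exact_mod_cast e1r
    have e2 : (a : ℂ) * (b : ℂ) + (b : ℂ) * (a : ℂ) = 1 := by exact_mod_cast e2r
    set B := (a : ℂ) • (1 : Matrix (Fin N → Fin 2) (Fin N → Fin 2) ℂ) + (b : ℂ) • A with hB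
    have hBh : Bᴴ = B := by
      rw [hB, Matrix.conjTranspose_add, Matrix.conjTranspose_smul,
        Matrix.conjTranspose_smul, hAherm, Matrix.conjTranspose_one,
        Complex.star_def, Complex.conj_ofReal, Complex.conj_ofReal]
    have hBB : B * B = 1 + A := by
      rw [hB]
      simp only [add_mul, mul_add, smul_mul_assoc, mul_smul_comm, smul_smul,
        one_mul, mul_one, hAsq]
      match_scalars
      · linear_combination e1
      · linear_combination e2
    have hMs : Mstate N c = ((((2 : ℝ) ^ N)⁻¹ : ℝ) : ℂ) • (Bᴴ * B) := by
      rw [hBh, hBB, hM]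
      congr 1
      push_cast
      ring
    rw [hMs]
    exact posSemidef_real_smul (Matrix.posSemidef_conjTranspose_mul_self B) (by positivity)
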